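/- Let α ∈ ℂ with 0 < |α| < 1 and set α∘ = 1/\bar{α}. Then G is block Toeplitz if and only if for all λ, ω ∈ ℂ one has (1 − λ\bar{α})(1 − α\bar{ω})·F(λ) N_α F(ω)* = (λ − α)(\bar{ω} − \bar{α})·F(λ) N_{α∘} F(ω)*. -/

import Mathlib

open Matrix Complex
open scoped ComplexConjugate ComplexOrder

noncomputable section

/-- Index type for `ℂ^m` with `m = (n+1)p`, viewed as `n+1` blocks of size `p`. -/
abbrev Idx (n p : ℕ) : Type := Fin (n + 1) × Fin p

/-- The `p × m` matrix polynomial `F(λ) = [I_p, λI_p, …, λ^n I_p]`. -/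
def Fm (n p : ℕ) (lam : ℂ) : Matrix (Fin p) (Idx n p) ℂ :=
  Matrix.of fun i jk => lam ^ (jk.1 : ℕ) * (if jk.2 = i then 1 else 0)

/-- The `m × p` matrix `e_k` whose `k`-th block is `I_p` and other blocks are `0`. -/
def Ek (n p : ℕ) (k : Fin (n + 1)) : Matrix (Idx n p) (Fin p) ℂ :=
  Matrix.of fun jl i => if jl.1 = k ∧ jl.2 = i then 1 else 0

/-- The nilpotent block shift matrix `A` with blocks `A_{ij} = I_p` iff `j = i+1`. -/
def Am (n p : ℕ) : Matrix (Idx n p) (Idx n p) ℂ :=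
  Matrix.of fun ia jb => if (jb.1 : ℕ) = (ia.1 : ℕ) + 1 ∧ ia.2 = jb.2 then 1 else 0

/-- `N_α = Γ − ΓF(α)*(F(α)ΓF(α)*)⁻¹F(α)Γ` where `Γ = G⁻¹`. -/
def Nm (n p : ℕ) (G : Matrix (Idx n p) (Idx n p) ℂ) (α : ℂ) : Matrix (Idx n p) (Idx n p) ℂ :=
  G⁻¹ - G⁻¹ * (Fm n p α)ᴴ * (Fm n p α * G⁻¹ * (Fm n p α)ᴴ)⁻¹ * Fm n p α * G⁻¹

/-- `G` is block Toeplitz: `g_{i+1,j+1} = g_{ij}` for `0 ≤ i,j ≤ n−1`. -/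
def BlockToeplitz (n p : ℕ) (G : Matrix (Idx n p) (Idx n p) ℂ) : Prop :=
  ∀ (i j : Fin n) (a b : Fin p),
    G (i.succ, a) (j.succ, b) = G (i.castSucc, a) (j.castSucc, b)

namespace Stmt8

variable (n p : ℕ)

/-- The embedding of degree `< n` coefficient space into degree `≤ n` space. -/
def Jm : Matrix (Idx n p) (Fin n × Fin p) ℂ :=
  Matrix.of fun ia jb => if ia = (jb.1.castSucc, jb.2) then 1 else 0

/-- The matrix of "multiplication by (λ - β)" from degree `< n` to degree `≤ n`. -/
def Xm (β : ℂ) : Matrix (Idx n p) (Fin n × Fin p) ℂ :=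
  Matrix.of fun ia jb =>
    (if ia = (jb.1.succ, jb.2) then 1 else 0) - (if ia = (jb.1.castSucc, jb.2) then β else 0)

/-- The Gram matrix `W_β = X_βᴴ G X_β`. -/
def Wm (G : Matrix (Idx n p) (Idx n p) ℂ) (β : ℂ) : Matrix (Fin n × Fin p) (Fin n × Fin p) ℂ :=
  (Xm n p β)ᴴ * G * Xm n p β

/-- A left inverse of `Xm` (for `β ≠ 0`). -/
def Lm (β : ℂ) : Matrix (Fin n × Fin p) (Idx n p) ℂ :=
  Matrix.of fun jb ia =>
    if ia.2 = jb.2 ∧ (ia.1 : ℕ) ≤ (jb.1 : ℕ) then -(β⁻¹) ^ ((jb.1 : ℕ) - (ia.1 : ℕ) + 1) else 0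

lemma Fm_mul_Jm (lam : ℂ) (a : Fin p) (jb : Fin n × Fin p) :
    (Fm n p lam * Jm n p) a jb = lam ^ (jb.1 : ℕ) * (if jb.2 = a then 1 else 0) := by
  rw [Matrix.mul_apply]
  rw [Finset.sum_eq_single (jb.1.castSucc, jb.2)]
  · simp [Fm, Jm]
  · intro x _ hx
    simp [Fm, Jm, hx]
  · simp

lemma mul_Xm_apply {m' : Type*} (β : ℂ) (M : Matrix m' (Idx n p) ℂ) (y : m')
    (jb : Fin n × Fin p) :
    (M * Xm n p β) y jb = M y (jb.1.succ, jb.2) - M y (jb.1.castSucc, jb.2) * β := by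
  rw [Matrix.mul_apply]
  simp only [Xm, Matrix.of_apply, mul_sub, mul_ite, mul_one, mul_zero,
    Finset.sum_sub_distrib, Finset.sum_ite_eq', Finset.mem_univ, if_pos]

lemma Xm_ct_mul_apply {m' : Type*} [Fintype m'] (β : ℂ) (M : Matrix (Idx n p) m' ℂ)
    (jb : Fin n × Fin p) (y : m') :
    ((Xm n p β)ᴴ * M) jb y = M (jb.1.succ, jb.2) y - conj β * M (jb.1.castSucc, jb.2) y := by
  rw [Matrix.mul_apply]
  simp only [Xm, Matrix.conjTranspose_apply, Matrix.of_apply, star_sub,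
    apply_ite (star : ℂ → ℂ), star_one, star_zero, sub_mul, ite_mul, one_mul, zero_mul,
    Finset.sum_sub_distrib, Finset.sum_ite_eq, Finset.sum_ite_eq', Finset.mem_univ, if_pos,
    Complex.star_def]

lemma Fm_mul_Xm (lam β : ℂ) :
    Fm n p lam * Xm n p β = (lam - β) • (Fm n p lam * Jm n p) := by
  ext a jb
  rw [mul_Xm_apply, Matrix.smul_apply, Fm_mul_Jm, smul_eq_mul]
  simp only [Fm, Matrix.of_apply, Fin.val_succ, Fin.coe_castSucc]
  by_cases h : jb.2 = a <;> simp [h] <;> ring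

lemma Fm_mul_Xm_self (β : ℂ) : Fm n p β * Xm n p β = 0 := by
  rw [Fm_mul_Xm, sub_self, zero_smul]

lemma Wm_apply (G : Matrix (Idx n p) (Idx n p) ℂ) (β : ℂ) (i j : Fin n) (a b : Fin p) :
    Wm n p G β (i, a) (j, b) =
      G (i.succ, a) (j.succ, b) - G (i.succ, a) (j.castSucc, b) * β
        - conj β * G (i.castSucc, a) (j.succ, b)
        + conj β * G (i.castSucc, a) (j.castSucc, b) * β := by
  rw [Wm, mul_Xm_apply, Xm_ct_mul_apply, Xm_ct_mul_apply]
  ring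

lemma Lm_mul_Xm {β : ℂ} (hβ : β ≠ 0) : Lm n p β * Xm n p β = 1 := by
  ext jb kc
  rw [mul_Xm_apply, Matrix.one_apply]
  obtain ⟨j, a⟩ := jb
  obtain ⟨k, c⟩ := kc
  simp only [Lm, Matrix.of_apply, Fin.val_succ, Fin.coe_castSucc, Prod.mk.injEq]
  by_cases hca : c = a
  · subst hca
    by_cases hkj : (k : ℕ) + 1 ≤ (j : ℕ)
    · rw [if_pos ⟨rfl, hkj⟩, if_pos ⟨rfl, by omega⟩, if_neg (by
        intro h; exact absurd (congrArg Fin.val h.1) (by omega))]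
      have h1 : (j : ℕ) - ((k : ℕ) + 1) + 1 = (j : ℕ) - (k : ℕ) := by omega
      have h2 : (j : ℕ) - (k : ℕ) + 1 = ((j : ℕ) - (k : ℕ)) + 1 := rfl
      rw [h1, h2, pow_succ]
      field_simp
      ring
    · by_cases hkj2 : (k : ℕ) = (j : ℕ)
      · have : j = k := by apply Fin.val_injective; omega
        subst this
        rw [if_neg (fun h => absurd h.2 (by omega)), if_pos ⟨rfl, by omega⟩, if_pos ⟨rfl, rfl⟩]
        simp only [Nat.sub_self, pow_one]
        field_simp
        simp [hβ]
      · rw [if_neg (fun h => absurd h.2 (by omega)), if_neg (fun h => absurd h.2 (by omega)),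
          if_neg (fun h => hkj2 (congrArg Fin.val h.1).symm)]
        simp
  · have hac : ¬ a = c := fun h => hca h.symm
    simp [hca, hac]

lemma Xm_mulVec_eq_zero {β : ℂ} (hβ : β ≠ 0) (v : Fin n × Fin p → ℂ)
    (hv : Xm n p β *ᵥ v = 0) : v = 0 := by
  have : (Lm n p β * Xm n p β) *ᵥ v = Lm n p β *ᵥ (Xm n p β *ᵥ v) :=
    (Matrix.mulVec_mulVec ..).symm
  rw [Lm_mul_Xm n p hβ, Matrix.one_mulVec, hv, Matrix.mulVec_zero] at this
  exact this

lemma Fm_ct_mulVec_eq_zero (β : ℂ) (u : Fin p → ℂ) (hu : (Fm n p β)ᴴ *ᵥ u = 0) : u = 0 := by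
  funext c
  have h := congrFun hu (⟨0, n.succ_pos⟩, c)
  rw [Matrix.mulVec, dotProduct] at h
  rw [Finset.sum_eq_single c] at h
  · simpa [Fm] using h
  · intro i _ hi
    simp [Fm, Matrix.conjTranspose_apply, Ne.symm hi]
  · simp

lemma posDef_conj_mul {l : Type*} [Fintype l] [DecidableEq l]
    {A : Matrix (Idx n p) (Idx n p) ℂ} (hA : A.PosDef)
    (B : Matrix (Idx n p) l ℂ) (hB : ∀ v, B *ᵥ v = 0 → v = 0) :
    (Bᴴ * A * B).PosDef := by
  refine Matrix.PosDef.of_dotProduct_mulVec_pos (Matrix.isHermitian_conjTranspose_mul_mul B hA.1) fun x hx => ?_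
  have hBx : B *ᵥ x ≠ 0 := fun h => hx (hB x h)
  simpa only [star_mulVec, Matrix.dotProduct_mulVec, Matrix.vecMul_vecMul] using
    hA.dotProduct_mulVec_pos hBx

lemma Wm_posDef {G : Matrix (Idx n p) (Idx n p) ℂ} (hG : G.PosDef) {β : ℂ} (hβ : β ≠ 0) :
    (Wm n p G β).PosDef :=
  posDef_conj_mul n p hG _ (Xm_mulVec_eq_zero n p hβ)

/-- The key formula: `N_β = X_β W_β⁻¹ X_βᴴ`. -/
lemma key {G : Matrix (Idx n p) (Idx n p) ℂ} (hG : G.PosDef) {β : ℂ} (hβ : β ≠ 0) :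
    Nm n p G β = Xm n p β * (Wm n p G β)⁻¹ * (Xm n p β)ᴴ := by
  classical
  set F := Fm n p β with hF
  set Xb := Xm n p β with hXb
  have hGdet : IsUnit G.det := (Matrix.isUnit_iff_isUnit_det G).mp hG.isUnit
  have hGΓ : G * G⁻¹ = 1 := Matrix.mul_nonsing_inv G hGdet
  have hΓG : G⁻¹ * G = 1 := Matrix.nonsing_inv_mul G hGdet
  have hDpd : (F * G⁻¹ * Fᴴ).PosDef := by
    have := posDef_conj_mul n p hG.inv Fᴴ (Fm_ct_mulVec_eq_zero n p β)
    simpa [Matrix.conjTranspose_conjTranspose] using this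
  have hDdet : IsUnit (F * G⁻¹ * Fᴴ).det := (Matrix.isUnit_iff_isUnit_det _).mp hDpd.isUnit
  set D := F * G⁻¹ * Fᴴ with hD
  have hDD : D⁻¹ * D = 1 := Matrix.nonsing_inv_mul _ hDdet
  have hWpd : (Wm n p G β).PosDef := Wm_posDef n p hG hβ
  have hWdet : IsUnit (Wm n p G β).det := (Matrix.isUnit_iff_isUnit_det _).mp hWpd.isUnit
  set W := Wm n p G β with hW
  have hWiW : W⁻¹ * W = 1 := Matrix.nonsing_inv_mul _ hWdet
  have hFX : F * Xb = 0 := Fm_mul_Xm_self n p β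
  have hXF : Xbᴴ * Fᴴ = 0 := by rw [← Matrix.conjTranspose_mul, hFX, Matrix.conjTranspose_zero]
  set N := Nm n p G β with hN
  set Y := Xb * W⁻¹ * Xbᴴ with hY
  have hD2 : F * (G⁻¹ * Fᴴ) = D := by rw [hD, Matrix.mul_assoc]
  have hGF : G * (G⁻¹ * Fᴴ) = Fᴴ := by rw [← Matrix.mul_assoc, hGΓ, Matrix.one_mul]
  have hW2 : Xbᴴ * (G * Xb) = W := by rw [hW, Wm, Matrix.mul_assoc]
  have hNG : N * G = 1 - G⁻¹ * Fᴴ * D⁻¹ * F := by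
    have hNe : N = G⁻¹ - G⁻¹ * Fᴴ * D⁻¹ * F * G⁻¹ := by
      rw [hN]
      simp only [Nm, ← hF, ← hD]
    rw [hNe, Matrix.sub_mul, hΓG, Matrix.mul_assoc (G⁻¹ * Fᴴ * D⁻¹ * F), hΓG, Matrix.mul_one]
  have h1 : N * G * Xb = Xb := by
    rw [hNG, Matrix.sub_mul, Matrix.one_mul, Matrix.mul_assoc, hFX, Matrix.mul_zero, sub_zero]
  have h2 : N * G * (G⁻¹ * Fᴴ) = 0 := by
    rw [hNG, Matrix.sub_mul, Matrix.one_mul]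
    simp only [Matrix.mul_assoc]
    rw [hD2, hDD, Matrix.mul_one, sub_self]
  have h3 : Y * G * Xb = Xb := by
    rw [hY]
    simp only [Matrix.mul_assoc]
    rw [hW2, hWiW, Matrix.mul_one]
  have h4 : Y * G * (G⁻¹ * Fᴴ) = 0 := by
    rw [hY]
    simp only [Matrix.mul_assoc]
    rw [hGF, hXF, Matrix.mul_zero, Matrix.mul_zero]
  -- spanning matrix
  let e : ((Fin n × Fin p) ⊕ Fin p) ≃ Idx n p :=
    Fintype.equivOfCardEq (by simp [Fintype.card_sum]; ring)
  set M : Matrix (Idx n p) ((Fin n × Fin p) ⊕ Fin p) ℂ :=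
    Matrix.fromCols Xb (G⁻¹ * Fᴴ) with hM
  set M' : Matrix (Idx n p) (Idx n p) ℂ := M.submatrix _root_.id ⇑e.symm with hM'
  have hZM : (N - Y) * G * M = 0 := by
    have e1 : N * G * M = Matrix.fromCols Xb 0 := by
      rw [hM, Matrix.mul_fromCols, h1, h2]
    have e2 : Y * G * M = Matrix.fromCols Xb 0 := by
      rw [hM, Matrix.mul_fromCols, h3, h4]
    rw [Matrix.sub_mul, Matrix.sub_mul, e1, e2, sub_self]
  have hMv : ∀ w : Idx n p → ℂ, M' *ᵥ w = 0 → w = 0 := by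
    intro w hw
    rw [hM', Matrix.submatrix_mulVec_equiv M w _root_.id e.symm] at hw
    have hw2 : M *ᵥ (w ∘ ⇑e) = 0 := by
      funext i
      simpa using congrFun hw i
    set u₁ : Fin n × Fin p → ℂ := (w ∘ ⇑e) ∘ Sum.inl with hu₁def
    set u₂ : Fin p → ℂ := (w ∘ ⇑e) ∘ Sum.inr with hu₂def
    have hsplit : (w ∘ ⇑e) = Sum.elim u₁ u₂ := by
      funext s
      cases s <;> rfl
    rw [hsplit, hM, Matrix.fromCols_mulVec_sumElim] at hw2
    have ha : (Xbᴴ * G) *ᵥ (Xb *ᵥ u₁ + (G⁻¹ * Fᴴ) *ᵥ u₂) = 0 := by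
      rw [hw2, Matrix.mulVec_zero]
    rw [Matrix.mulVec_add, Matrix.mulVec_mulVec, Matrix.mulVec_mulVec] at ha
    have hXGF : Xbᴴ * G * (G⁻¹ * Fᴴ) = 0 := by
      rw [Matrix.mul_assoc, hGF, hXF]
    have hWW : Xbᴴ * G * Xb = W := by
      rw [hW]
      simp only [Wm, ← hXb]
    rw [hXGF, hWW, Matrix.zero_mulVec, add_zero] at ha
    have hu₁ : u₁ = 0 := by
      have h5 : (W⁻¹ * W) *ᵥ u₁ = 0 := by
        rw [← Matrix.mulVec_mulVec, ha, Matrix.mulVec_zero]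
      rwa [hWiW, Matrix.one_mulVec] at h5
    rw [hu₁, Matrix.mulVec_zero, zero_add] at hw2
    have hFu : Fᴴ *ᵥ u₂ = 0 := by
      have h5 : (G * (G⁻¹ * Fᴴ)) *ᵥ u₂ = 0 := by
        rw [← Matrix.mulVec_mulVec, hw2, Matrix.mulVec_zero]
      rwa [hGF] at h5
    have hu₂ : u₂ = 0 := Fm_ct_mulVec_eq_zero n p β u₂ hFu
    funext j
    have h6 : w j = Sum.elim u₁ u₂ (e.symm j) := by
      rw [← hsplit]
      simp
    rw [hu₁, hu₂] at h6
    simpa using h6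
  have hM'unit : IsUnit M' := by
    rw [← Matrix.mulVec_injective_iff_isUnit]
    intro x y hxy
    have h7 := hMv (x - y) (by rw [Matrix.mulVec_sub, hxy, sub_self])
    exact sub_eq_zero.mp h7
  have hM'det : IsUnit M'.det := (Matrix.isUnit_iff_isUnit_det _).mp hM'unit
  have hZM' : (N - Y) * G * M' = 0 := by
    have h8 : (N - Y) * G * M' = ((N - Y) * G * M).submatrix _root_.id ⇑e.symm := by
      ext i j
      simp [hM', Matrix.mul_apply]
    rw [h8, hZM]
    simp
  have hZG : (N - Y) * G = 0 := by
    have h9 : (N - Y) * G * (M' * M'⁻¹) = 0 := by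
      rw [← Matrix.mul_assoc, hZM', Matrix.zero_mul]
    rwa [Matrix.mul_nonsing_inv _ hM'det, Matrix.mul_one] at h9
  have hfin : N - Y = 0 := by
    have h10 : N - Y = (N - Y) * (G * G⁻¹) := by rw [hGΓ, Matrix.mul_one]
    rw [h10, ← Matrix.mul_assoc, hZG, Matrix.zero_mul]
  rw [← sub_eq_zero]
  exact hfin

/-- Sandwich formula. -/
lemma sandwich (β lam om : ℂ) (Z : Matrix (Fin n × Fin p) (Fin n × Fin p) ℂ) :
    Fm n p lam * (Xm n p β * Z * (Xm n p β)ᴴ) * (Fm n p om)ᴴ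
      = ((lam - β) * conj (om - β)) •
        (Fm n p lam * Jm n p * Z * (Fm n p om * Jm n p)ᴴ) := by
  have h1 : Fm n p lam * (Xm n p β * Z * (Xm n p β)ᴴ) * (Fm n p om)ᴴ
      = (Fm n p lam * Xm n p β) * Z * (Fm n p om * Xm n p β)ᴴ := by
    rw [Matrix.conjTranspose_mul]
    simp only [Matrix.mul_assoc]
  rw [h1, Fm_mul_Xm, Fm_mul_Xm, Matrix.conjTranspose_smul, Matrix.smul_mul, Matrix.smul_mul,
    Matrix.mul_smul, smul_smul, Complex.star_def]

lemma FJ_sandwich_apply (lam om : ℂ) (Z : Matrix (Fin n × Fin p) (Fin n × Fin p) ℂ)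
    (a b : Fin p) :
    (Fm n p lam * Jm n p * Z * (Fm n p om * Jm n p)ᴴ) a b
      = ∑ j : Fin n, ∑ k : Fin n, lam ^ (j : ℕ) * conj om ^ (k : ℕ) * Z (j, a) (k, b) := by
  have hL : ∀ (x : Fin n × Fin p), (Fm n p lam * Jm n p * Z) a x
      = ∑ j : Fin n, lam ^ (j : ℕ) * Z (j, a) x := by
    intro x
    rw [Matrix.mul_apply, Fintype.sum_prod_type]
    apply Finset.sum_congr rfl
    intro j _
    rw [Finset.sum_eq_single a]
    · rw [Fm_mul_Jm]
      simp
    · intro c _ hc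
      rw [Fm_mul_Jm]
      simp [hc]
    · simp
  rw [Matrix.mul_apply, Fintype.sum_prod_type]
  have hR : ∀ k : Fin n, ∑ d : Fin p,
      (Fm n p lam * Jm n p * Z) a (k, d) * (Fm n p om * Jm n p)ᴴ (k, d) b
      = conj om ^ (k : ℕ) * ∑ j : Fin n, lam ^ (j : ℕ) * Z (j, a) (k, b) := by
    intro k
    rw [Finset.sum_eq_single b]
    · rw [hL, Matrix.conjTranspose_apply, Fm_mul_Jm]
      simp only [eq_self_iff_true, if_true, mul_one, Complex.star_def, _root_.map_pow]
      ring
    · intro d _ hd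
      rw [Matrix.conjTranspose_apply, Fm_mul_Jm]
      simp [hd]
    · simp
  rw [Finset.sum_congr rfl (fun k _ => hR k)]
  simp only [Finset.mul_sum]
  rw [Finset.sum_comm]
  apply Finset.sum_congr rfl
  intro j _
  apply Finset.sum_congr rfl
  intro k _
  ring
lemma fin_poly_zero {N : ℕ} (c : Fin N → ℂ) {S : Set ℂ} (hS : S.Infinite)
    (h : ∀ x ∈ S, ∑ j : Fin N, x ^ (j : ℕ) * c j = 0) : ∀ j, c j = 0 := by
  have hP : (∑ j : Fin N, Polynomial.monomial (j : ℕ) (c j)) = 0 := by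
    apply Polynomial.eq_zero_of_infinite_isRoot
    apply Set.Infinite.mono ?_ hS
    intro x hx
    simp only [Set.mem_setOf_eq, Polynomial.IsRoot, Polynomial.eval_finset_sum,
      Polynomial.eval_monomial]
    rw [← h x hx]
    apply Finset.sum_congr rfl
    intro j _
    ring
  intro j
  have h2 := congrArg (fun q => Polynomial.coeff q (j : ℕ)) hP
  simp only [Polynomial.finset_sum_coeff, Polynomial.coeff_monomial, Polynomial.coeff_zero] at h2
  rw [Finset.sum_eq_single j] at h2
  · simpa using h2
  · intro j' _ hj'
    rw [if_neg (fun hjj => hj' (Fin.val_injective hjj))]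
  · simp

lemma one_sub_mul_conj_ne (α : ℂ) (hα1 : ‖α‖ < 1) : 1 - α * conj α ≠ 0 := by
  rw [Complex.mul_conj]
  intro h
  have h2 := congrArg Complex.re h
  simp only [Complex.sub_re, Complex.one_re, Complex.ofReal_re, Complex.zero_re] at h2
  have h3 : Complex.normSq α < 1 := by
    rw [← Complex.sq_norm]
    nlinarith [norm_nonneg α, hα1]
  linarith

lemma toeplitz_iff_W {G : Matrix (Idx n p) (Idx n p) ℂ} {α : ℂ}
    (hα0 : α ≠ 0) (hα1 : ‖α‖ < 1) :
    BlockToeplitz n p G ↔ Wm n p G α = (α * conj α) • Wm n p G (conj α)⁻¹ := by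
  have hcα0 : conj α ≠ 0 := fun h => hα0 (by simpa using congrArg conj h)
  have hc1 : 1 - α * conj α ≠ 0 := one_sub_mul_conj_ne α hα1
  constructor
  · intro hT
    ext ⟨i, a⟩ ⟨j, b⟩
    rw [Matrix.smul_apply, Wm_apply, Wm_apply, smul_eq_mul]
    simp only [map_inv₀, Complex.conj_conj]
    rw [hT i j a b]
    field_simp
    ring
  · intro hE i j a b
    have E : Wm n p G α (i, a) (j, b) = ((α * conj α) • Wm n p G (conj α)⁻¹) (i, a) (j, b) := by
      rw [hE]
    rw [Matrix.smul_apply, Wm_apply, Wm_apply, smul_eq_mul] at E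
    simp only [map_inv₀, Complex.conj_conj] at E
    have key3 : (α * conj α) * (α * conj α) * ((1 - α * conj α) *
        (G (i.succ, a) (j.succ, b) - G (i.castSucc, a) (j.castSucc, b))) = 0 := by
      field_simp at E
      linear_combination (α * conj α) * (α * conj α) * E
    have key2 : (1 - α * conj α) *
        (G (i.succ, a) (j.succ, b) - G (i.castSucc, a) (j.castSucc, b)) = 0 :=
      (mul_eq_zero.mp key3).resolve_left
        (mul_ne_zero (mul_ne_zero hα0 hcα0) (mul_ne_zero hα0 hcα0))
    rcases mul_eq_zero.mp key2 with h | h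
    · exact absurd h hc1
    · exact sub_eq_zero.mp h

end Stmt8

open Stmt8

theorem stmt8 (p n : ℕ) (hp : 0 < p) (hn : 0 < n)
    (G : Matrix (Idx n p) (Idx n p) ℂ) (hG : G.PosDef) (α : ℂ)
    (hα0 : α ≠ 0) (hα1 : ‖α‖ < 1) :
    BlockToeplitz n p G ↔
      ∀ lam om : ℂ,
        ((1 - lam * conj α) * (1 - α * conj om)) • (Fm n p lam * Nm n p G α * (Fm n p om)ᴴ) =
          ((lam - α) * (conj om - conj α)) •
            (Fm n p lam * Nm n p G (conj α)⁻¹ * (Fm n p om)ᴴ) := by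
  have hcα0 : conj α ≠ 0 := fun h => hα0 (by simpa using congrArg conj h)
  have hβ0 : (conj α)⁻¹ ≠ 0 := inv_ne_zero hcα0
  have hc0 : α * conj α ≠ 0 := mul_ne_zero hα0 hcα0
  have hWα : (Wm n p G α).PosDef := Wm_posDef n p hG hα0
  have hWβ : (Wm n p G ((conj α)⁻¹)).PosDef := Wm_posDef n p hG hβ0
  have hWαdet : IsUnit (Wm n p G α).det := (Matrix.isUnit_iff_isUnit_det _).mp hWα.isUnit
  have hWβdet : IsUnit (Wm n p G ((conj α)⁻¹)).det :=
    (Matrix.isUnit_iff_isUnit_det _).mp hWβ.isUnit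
  have hWαinv : Wm n p G α * (Wm n p G α)⁻¹ = 1 := Matrix.mul_nonsing_inv _ hWαdet
  have hWβinvW : (Wm n p G ((conj α)⁻¹))⁻¹ * Wm n p G ((conj α)⁻¹) = 1 :=
    Matrix.nonsing_inv_mul _ hWβdet
  rw [toeplitz_iff_W n p hα0 hα1]
  constructor
  · intro hw lam om
    have hinv : (Wm n p G ((conj α)⁻¹))⁻¹ = (α * conj α) • (Wm n p G α)⁻¹ := by
      apply Matrix.inv_eq_right_inv
      have hWβeq : Wm n p G ((conj α)⁻¹) = (α * conj α)⁻¹ • Wm n p G α := by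
        rw [hw, smul_smul, inv_mul_cancel₀ hc0, one_smul]
      rw [hWβeq, Matrix.smul_mul, Matrix.mul_smul, hWαinv, smul_smul,
        inv_mul_cancel₀ hc0, one_smul]
    rw [key n p hG hα0, key n p hG hβ0, sandwich, sandwich, hinv, Matrix.mul_smul,
      Matrix.smul_mul]
    simp only [smul_smul]
    congr 1
    simp only [map_sub, map_inv₀, Complex.conj_conj]
    field_simp
    ring
  · intro h
    set Δ := (Wm n p G α)⁻¹ - (α * conj α)⁻¹ • (Wm n p G ((conj α)⁻¹))⁻¹ with hΔdef
    have hEnt : ∀ (lam mu : ℂ), lam ≠ α → lam ≠ (conj α)⁻¹ → mu ≠ conj α → mu ≠ α⁻¹ →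
        ∀ a b : Fin p,
          ∑ j : Fin n, ∑ k : Fin n, lam ^ (j : ℕ) * mu ^ (k : ℕ) * Δ (j, a) (k, b) = 0 := by
      intro lam mu h1 h2 h3 h4 a b
      have hmu : conj (conj mu) = mu := Complex.conj_conj mu
      have H := h lam (conj mu)
      rw [key n p hG hα0, key n p hG hβ0, sandwich, sandwich, smul_smul, smul_smul] at H
      have hs : (lam - α) * (conj (conj mu) - conj α) *
            ((lam - (conj α)⁻¹) * conj (conj mu - (conj α)⁻¹))
          = (α * conj α)⁻¹ * ((1 - lam * conj α) * (1 - α * conj (conj mu)) *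
            ((lam - α) * conj (conj mu - α))) := by
        simp only [map_sub, map_inv₀, Complex.conj_conj]
        field_simp
        ring
      rw [hs] at H
      have H2 : ((1 - lam * conj α) * (1 - α * conj (conj mu)) *
            ((lam - α) * conj (conj mu - α))) •
          (Fm n p lam * Jm n p * Δ * (Fm n p (conj mu) * Jm n p)ᴴ) = 0 := by
        rw [hΔdef, Matrix.mul_sub, Matrix.sub_mul, Matrix.mul_smul, Matrix.smul_mul,
          smul_sub, H, smul_smul]
        rw [mul_comm ((α * conj α)⁻¹)]
        exact sub_self _
      have hsne : (1 - lam * conj α) * (1 - α * conj (conj mu)) *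
          ((lam - α) * conj (conj mu - α)) ≠ 0 := by
        simp only [map_sub, Complex.conj_conj]
        apply mul_ne_zero (mul_ne_zero ?_ ?_) (mul_ne_zero ?_ ?_)
        · intro hz
          exact h2 (eq_inv_of_mul_eq_one_left (sub_eq_zero.mp hz).symm)
        · intro hz
          exact h4 (eq_inv_of_mul_eq_one_right (sub_eq_zero.mp hz).symm)
        · exact sub_ne_zero_of_ne h1
        · exact sub_ne_zero_of_ne h3
      have H3 : Fm n p lam * Jm n p * Δ * (Fm n p (conj mu) * Jm n p)ᴴ = 0 :=
        (smul_eq_zero.mp H2).resolve_left hsne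
      have H4 := congrFun (congrFun H3 a) b
      rw [FJ_sandwich_apply] at H4
      rw [hmu] at H4
      simpa using H4
    have hSinf1 : ({α, (conj α)⁻¹}ᶜ : Set ℂ).Infinite := (Set.toFinite _).infinite_compl
    have hSinf2 : ({conj α, α⁻¹}ᶜ : Set ℂ).Infinite := (Set.toFinite _).infinite_compl
    have hall : ∀ (a b : Fin p) (j : Fin n), ∀ k, Δ (j, a) (k, b) = 0 := by
      intro a b
      have step1 : ∀ mu ∈ ({conj α, α⁻¹}ᶜ : Set ℂ), ∀ j : Fin n,
          (∑ k : Fin n, mu ^ (k : ℕ) * Δ (j, a) (k, b)) = 0 := by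
        intro mu hmu
        apply fin_poly_zero _ hSinf1
        intro x hx
        simp only [Set.mem_compl_iff, Set.mem_insert_iff, Set.mem_singleton_iff, not_or]
          at hx hmu
        have hE := hEnt x mu hx.1 hx.2 hmu.1 hmu.2 a b
        rw [← hE]
        apply Finset.sum_congr rfl
        intro j _
        rw [Finset.mul_sum]
        apply Finset.sum_congr rfl
        intro k _
        ring
      intro j
      apply fin_poly_zero _ hSinf2
      intro mu hmu
      exact step1 mu hmu j
    have hΔ0 : Δ = 0 := by
      ext ⟨j, a⟩ ⟨k, b⟩
      rw [Matrix.zero_apply]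
      exact hall a b j k
    have hiv : (Wm n p G α)⁻¹ = (α * conj α)⁻¹ • (Wm n p G ((conj α)⁻¹))⁻¹ :=
      sub_eq_zero.mp hΔ0
    have h5 : Wm n p G α * ((α * conj α)⁻¹ • (Wm n p G ((conj α)⁻¹))⁻¹) = 1 := by
      rw [← hiv]
      exact hWαinv
    have h6 : ((α * conj α)⁻¹ • (Wm n p G ((conj α)⁻¹))⁻¹) *
        ((α * conj α) • Wm n p G ((conj α)⁻¹)) = 1 := by
      rw [Matrix.smul_mul, Matrix.mul_smul, hWβinvW, smul_smul, inv_mul_cancel₀ hc0, one_smul]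
    calc Wm n p G α = Wm n p G α * 1 := by rw [Matrix.mul_one]
      _ = Wm n p G α * (((α * conj α)⁻¹ • (Wm n p G ((conj α)⁻¹))⁻¹) *
            ((α * conj α) • Wm n p G ((conj α)⁻¹))) := by rw [h6]
      _ = (Wm n p G α * ((α * conj α)⁻¹ • (Wm n p G ((conj α)⁻¹))⁻¹)) *
            ((α * conj α) • Wm n p G ((conj α)⁻¹)) := by rw [Matrix.mul_assoc]
      _ = (α * conj α) • Wm n p G ((conj α)⁻¹) := by rw [h5, Matrix.one_mul]

end
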